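/- Let m ≥ 3 and let H_m denote the linear space of real m×m matrices whose diagonal entries all vanish (hollow matrices). Then the set of A ∈ H_m whose spectrum is disjoint from the imaginary axis iℝ is dense in H_m. (In fact it is open, dense, and of full Lebesgue measure in H_m.) -/

import Mathlib

open Matrix Polynomial

noncomputable section Aux6

def ksum6 {m : ℕ} (B : Matrix (Fin m) (Fin m) ℂ) :
    Matrix (Fin m × Fin m) (Fin m × Fin m) ℂ :=
  fun p q => B p.1 q.1 * (if p.2 = q.2 then 1 else 0)
    + (if p.1 = q.1 then 1 else 0) * B p.2 q.2

lemma ksum6_mulVec {m : ℕ} (B : Matrix (Fin m) (Fin m) ℂ) (w : Fin m × Fin m → ℂ)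
    (p : Fin m × Fin m) :
    (ksum6 B *ᵥ w) p = (∑ k, B p.1 k * w (k, p.2)) + (∑ l, B p.2 l * w (p.1, l)) := by
  simp only [Matrix.mulVec, dotProduct, ksum6, Fintype.sum_prod_type, add_mul,
    Finset.sum_add_distrib, ite_mul, one_mul, zero_mul, mul_ite, mul_one, mul_zero]
  congr 1
  · rw [Finset.sum_comm]
    simp
  · simp

lemma ksum6_add_smul {m : ℕ} (X Y : Matrix (Fin m) (Fin m) ℂ) (c : ℂ) :
    ksum6 (X + c • Y) = ksum6 X + c • ksum6 Y := by
  funext p q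
  by_cases h1 : p.2 = q.2 <;> by_cases h2 : p.1 = q.1 <;>
    simp [ksum6, h1, h2, Matrix.add_apply, Matrix.smul_apply, smul_eq_mul] <;> ring

def Sc6 (m : ℕ) : Matrix (Fin m) (Fin m) ℂ := fun i j => if i = j then 0 else 1

lemma Sc6_ker {m : ℕ} (hm : 3 ≤ m) (w : Fin m × Fin m → ℂ)
    (h : ksum6 (Sc6 m) *ᵥ w = 0) : w = 0 := by
  have key : ∀ i j : Fin m, (∑ k, w (k, j)) + (∑ l, w (i, l)) = 2 * w (i, j) := by
    intro i j
    have h1 := congrFun h (i, j)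
    rw [ksum6_mulVec] at h1
    have e1 : (∑ k, Sc6 m i k * w (k, j)) = (∑ k, w (k, j)) - w (i, j) := by
      have : ∀ k, Sc6 m i k * w (k, j) = w (k, j) - (if k = i then w (k, j) else 0) := by
        intro k
        by_cases hk : i = k <;> simp [Sc6, hk, eq_comm]
      rw [Finset.sum_congr rfl (fun k _ => this k), Finset.sum_sub_distrib,
        Finset.sum_ite_eq' Finset.univ i (fun k => w (k, j))]
      simp
    have e2 : (∑ l, Sc6 m j l * w (i, l)) = (∑ l, w (i, l)) - w (i, j) := by
      have : ∀ l, Sc6 m j l * w (i, l) = w (i, l) - (if l = j then w (i, l) else 0) := by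
        intro l
        by_cases hl : j = l <;> simp [Sc6, hl, eq_comm]
      rw [Finset.sum_congr rfl (fun l _ => this l), Finset.sum_sub_distrib,
        Finset.sum_ite_eq' Finset.univ j (fun l => w (i, l))]
      simp
    rw [e1, e2] at h1
    simp only [Pi.zero_apply] at h1
    linear_combination h1
  have hm1 : ((m : ℂ) - 2) ≠ 0 := by
    intro hc
    have h2 : (m : ℂ) = ((2 : ℕ) : ℂ) := by push_cast; linear_combination hc
    have := Nat.cast_injective (R := ℂ) h2
    omega
  -- total sum is zero
  set T : ℂ := ∑ i, ∑ l, w (i, l) with hT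
  have hTC : (∑ j, ∑ k, w (k, j)) = T := Finset.sum_comm
  have hT0 : T = 0 := by
    have e : ∑ i, ∑ j, ((∑ k, w (k, j)) + (∑ l, w (i, l))) = ∑ i, ∑ j, 2 * w (i, j) :=
      Finset.sum_congr rfl fun i _ => Finset.sum_congr rfl fun j _ => key i j
    simp only [Finset.sum_add_distrib, Finset.sum_const, Finset.card_univ, Fintype.card_fin,
      nsmul_eq_mul, ← Finset.mul_sum] at e
    rw [hTC, ← hT] at e
    have : ((m : ℂ) + m - 2) * T = 0 := by linear_combination e
    rcases mul_eq_zero.mp this with h' | h'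
    · exfalso
      have h2 : ((m + m : ℕ) : ℂ) = ((2 : ℕ) : ℂ) := by push_cast; linear_combination h'
      have := Nat.cast_injective (R := ℂ) h2
      omega
    · exact h'
  have hCj : ∀ j, (∑ k, w (k, j)) = 0 := by
    intro j
    have e : ∑ i, ((∑ k, w (k, j)) + (∑ l, w (i, l))) = ∑ i, 2 * w (i, j) :=
      Finset.sum_congr rfl fun i _ => key i j
    simp only [Finset.sum_add_distrib, Finset.sum_const, Finset.card_univ, Fintype.card_fin,
      nsmul_eq_mul, ← Finset.mul_sum] at e
    rw [← hT, hT0] at e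
    -- e : m * (∑ k, w (k,j)) + 0 = 2 * ∑ i, w (i, j)
    have : ((m : ℂ) - 2) * (∑ k, w (k, j)) = 0 := by linear_combination e
    exact (mul_eq_zero.mp this).resolve_left hm1
  have hRi : ∀ i, (∑ l, w (i, l)) = 0 := by
    intro i
    have e : ∑ j, ((∑ k, w (k, j)) + (∑ l, w (i, l))) = ∑ j, 2 * w (i, j) :=
      Finset.sum_congr rfl fun j _ => key i j
    simp only [Finset.sum_add_distrib, Finset.sum_const, Finset.card_univ, Fintype.card_fin,
      nsmul_eq_mul, ← Finset.mul_sum] at e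
    rw [hTC, hT0] at e
    have : ((m : ℂ) - 2) * (∑ l, w (i, l)) = 0 := by linear_combination e
    exact (mul_eq_zero.mp this).resolve_left hm1
  funext p
  have h2 := key p.1 p.2
  rw [hCj, hRi] at h2
  have h3 : (2 : ℂ) * w (p.1, p.2) = 0 := by linear_combination -h2
  have h4 := mul_eq_zero.mp h3
  simpa using h4.resolve_left (by norm_num)

end Aux6

section Aux6b
open Matrix Polynomial

variable {m : ℕ}

lemma charpoly_eval6 {n : Type*} [Fintype n] [DecidableEq n]
    (M : Matrix n n ℂ) (t : ℂ) :
    (M.charpoly).eval t = (t • (1 : Matrix n n ℂ) - M).det := by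
  rw [Matrix.charpoly,
    show (M.charmatrix.det).eval t = (Polynomial.evalRingHom t) M.charmatrix.det from rfl,
    RingHom.map_det]
  congr 1
  funext i j
  by_cases hij : i = j <;>
    simp [Matrix.charmatrix_apply, hij, Matrix.one_apply, Matrix.diagonal_apply,
      Matrix.smul_apply, Matrix.sub_apply]

/-- If `det N ≠ 0` then `t ↦ det (M + t • N)` vanishes only finitely often. -/
lemma finite_bad6 {n : Type*} [Fintype n] [DecidableEq n]
    (M N : Matrix n n ℂ) (hN : N.det ≠ 0) :
    {t : ℂ | (M + t • N).det = 0}.Finite := by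
  have hNu : IsUnit N.det := isUnit_iff_ne_zero.mpr hN
  set C : Matrix n n ℂ := N⁻¹ * M with hCdef
  have hfac : ∀ t : ℂ, M + t • N = N * (t • 1 - (-C)) := by
    intro t
    rw [Matrix.mul_sub, Matrix.mul_smul, Matrix.mul_one, hCdef, Matrix.mul_neg,
      ← Matrix.mul_assoc, Matrix.mul_nonsing_inv _ hNu, Matrix.one_mul]
    abel
  have hsub : {t : ℂ | (M + t • N).det = 0} ⊆ {t : ℂ | ((-C).charpoly).IsRoot t} := by
    intro t ht
    simp only [Set.mem_setOf_eq] at ht ⊢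
    rw [hfac, Matrix.det_mul] at ht
    rcases mul_eq_zero.mp ht with h' | h'
    · exact absurd h' hN
    · rw [Polynomial.IsRoot, charpoly_eval6]
      exact h'
  exact Set.Finite.subset (Polynomial.finite_setOf_isRoot ((-C).charpoly_monic.ne_zero)) hsub

/-- If `z` and `-z` are both eigenvalues of `B` then the Kronecker sum is singular. -/
lemma ksum6_det_zero {m : ℕ} (B : Matrix (Fin m) (Fin m) ℂ) (z : ℂ)
    (h1 : (B - z • 1).det = 0) (h2 : (B + z • 1).det = 0) :
    (ksum6 B).det = 0 := by
  obtain ⟨u, hu, huB⟩ := (Matrix.exists_mulVec_eq_zero_iff).mpr h1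
  obtain ⟨v, hv, hvB⟩ := (Matrix.exists_mulVec_eq_zero_iff).mpr h2
  have huB' : B *ᵥ u = z • u := by
    have := congrArg (· + (z • 1 : Matrix (Fin m) (Fin m) ℂ) *ᵥ u) huB
    simpa [Matrix.sub_mulVec, Matrix.smul_mulVec, Matrix.one_mulVec] using this
  have hvB' : B *ᵥ v = -z • v := by
    have := congrArg (· - (z • 1 : Matrix (Fin m) (Fin m) ℂ) *ᵥ v) hvB
    simpa [Matrix.add_mulVec, Matrix.smul_mulVec, Matrix.one_mulVec, neg_smul] using this
  rw [← Matrix.exists_mulVec_eq_zero_iff]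
  refine ⟨fun p => u p.1 * v p.2, ?_, ?_⟩
  · obtain ⟨i, hi⟩ := Function.ne_iff.mp hu
    obtain ⟨j, hj⟩ := Function.ne_iff.mp hv
    intro hc
    exact (mul_ne_zero (by simpa using hi) (by simpa using hj)) (by simpa using congrFun hc (i, j))
  · funext p
    rw [ksum6_mulVec]
    have e1 : (∑ k, B p.1 k * (u k * v p.2)) = (B *ᵥ u) p.1 * v p.2 := by
      rw [Matrix.mulVec, dotProduct, Finset.sum_mul]
      exact Finset.sum_congr rfl fun k _ => by ring
    have e2 : (∑ l, B p.2 l * (u p.1 * v l)) = u p.1 * (B *ᵥ v) p.2 := by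
      rw [Matrix.mulVec, dotProduct, Finset.mul_sum]
      exact Finset.sum_congr rfl fun l _ => by ring
    rw [e1, e2, huB', hvB']
    simp
    ring

end Aux6b

theorem stmt6 (m : ℕ) (hm : 3 ≤ m)
    (A : Matrix (Fin m) (Fin m) ℝ) (hA : ∀ i, A i i = 0)
    (ε : ℝ) (hε : 0 < ε) :
    ∃ B : Matrix (Fin m) (Fin m) ℝ,
      (∀ i, B i i = 0) ∧
      (∀ i j, |B i j - A i j| < ε) ∧
      (∀ z ∈ spectrum ℂ (B.map Complex.ofReal), z.re ≠ 0) := by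
  classical
  set Sr : Matrix (Fin m) (Fin m) ℝ := fun i j => if i = j then 0 else 1 with hSr
  set A' : Matrix (Fin m) (Fin m) ℂ := A.map Complex.ofReal with hA'
  -- the Kronecker sum of Sc6 is nonsingular
  have hSdet : (ksum6 (Sc6 m)).det ≠ 0 := by
    intro hc
    obtain ⟨v, hv, hvz⟩ := Matrix.exists_mulVec_eq_zero_iff.mpr hc
    exact hv (Sc6_ker hm v hvz)
  have hbad : {t : ℂ | (ksum6 A' + t • ksum6 (Sc6 m)).det = 0}.Finite :=
    finite_bad6 _ _ hSdet
  -- pick a good real t in (0, ε)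
  obtain ⟨zt, hzt⟩ : (((fun x : ℝ => (x : ℂ)) '' Set.Ioo 0 ε) \
      {t : ℂ | (ksum6 A' + t • ksum6 (Sc6 m)).det = 0}).Nonempty := by
    apply Set.Infinite.nonempty
    apply Set.Infinite.diff _ hbad
    exact Set.Infinite.image (fun x _ y _ h => Complex.ofReal_injective h)
      (Set.Ioo_infinite hε)
  obtain ⟨⟨t, ht, hteq⟩, htgood⟩ := hzt
  obtain ⟨ht0, htε⟩ := ht
  refine ⟨A + t • Sr, ?_, ?_, ?_⟩
  · intro i
    rw [Matrix.add_apply, Matrix.smul_apply]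
    simp [hSr, hA i]
  · intro i j
    have : (A + t • Sr) i j - A i j = t * Sr i j := by
      simp [Matrix.add_apply, Matrix.smul_apply, smul_eq_mul]
    rw [this]
    by_cases hij : i = j
    · simpa [hSr, hij] using hε
    · have hs1 : Sr i j = 1 := by simp [hSr, hij]
      rw [hs1, mul_one, abs_of_pos ht0]
      exact htε
  · intro z hz hre
    -- the complexified matrix
    have hmap : (A + t • Sr).map Complex.ofReal = A' + (t : ℂ) • Sc6 m := by
      funext i j
      rw [Matrix.map_apply, Matrix.add_apply, Matrix.smul_apply]
      simp only [Matrix.map_apply, Matrix.add_apply, Matrix.smul_apply, smul_eq_mul, hA',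
        hSr, Sc6, Complex.ofReal_add, Complex.ofReal_mul]
      by_cases hij : i = j <;> simp [hij]
    set M : Matrix (Fin m) (Fin m) ℂ := (A + t • Sr).map Complex.ofReal with hM
    -- z eigenvalue : det (M - z • 1) = 0
    have hdet1 : (M - z • 1).det = 0 := by
      rw [spectrum.mem_iff] at hz
      have h1 : ¬ IsUnit ((z • 1 - M).det) := fun hc =>
        hz ((Matrix.isUnit_iff_isUnit_det _).mpr (by
          rwa [Algebra.algebraMap_eq_smul_one]))
      have h2 : (z • 1 - M).det = 0 := by
        by_contra hc
        exact h1 (isUnit_iff_ne_zero.mpr hc)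
      have : (M - z • 1) = -(z • 1 - M) := by abel
      rw [this, Matrix.det_neg, h2, mul_zero]
    -- conjugation: det (M + z • 1) = 0
    have hzc : (starRingEnd ℂ) z = -z := by
      apply Complex.ext <;> simp [hre]
    have hMr : ∀ i j, (starRingEnd ℂ) (M i j) = M i j := by
      intro i j
      rw [hM]
      simp [Matrix.map_apply]
    have hconj : (M - z • 1).map (starRingEnd ℂ) = M + z • 1 := by
      funext i j
      simp only [Matrix.map_apply, Matrix.sub_apply, Matrix.add_apply, Matrix.smul_apply,
        smul_eq_mul, map_sub, _root_.map_mul, hzc, hMr]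
      by_cases hij : i = j <;> simp [Matrix.one_apply, hij] <;> ring
    have hdet2 : (M + z • 1).det = 0 := by
      have hd : (starRingEnd ℂ) ((M - z • 1).det) = ((M - z • 1).map (starRingEnd ℂ)).det := by
        rw [← RingHom.mapMatrix_apply]
        exact RingHom.map_det _ _
      rw [← hconj, ← hd, hdet1, map_zero]
    -- contradiction with the choice of t
    have hfin : (ksum6 M).det = 0 := ksum6_det_zero M z hdet1 hdet2
    rw [hM.trans hmap, ksum6_add_smul] at hfin
    simp only at hteq
    rw [hteq] at hfin
    exact htgood hfin
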